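/- Assume (A1) r = Xᵀy has all coordinates strictly positive and (A2) M_{ij} ≤ 0 for all i ≠ j, where M = XᵀX. Then for every subset I ⊆ {1,…,d}: the principal submatrix M_{II} is invertible, the vector (M_{II})⁻¹ r_I has all coordinates strictly positive, and the vector θ_*^{(I)} ∈ ℝ^d defined by (θ_*^{(I)})_I = (M_{II})⁻¹ r_I and (θ_*^{(I)})_i = 0 for i ∉ I is a nonnegative fixed point of the vector field Ψ(θ)_i = θ_i (r_i − (Mθ)_i), i.e. θ_{*,i}^{(I)} (r_i − (M θ_*^{(I)})_i) = 0 for all i, and its support {i : θ_{*,i}^{(I)} > 0} equals I. -/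

import Mathlib

open Matrix

/-- The principal submatrix `M_{II}` of `M` indexed by a subset `I`. -/
def subMat {d : ℕ} (M : Matrix (Fin d) (Fin d) ℝ) (I : Finset (Fin d)) :
    Matrix I I ℝ := fun a b => M a b

/-- The subvector `r_I` of `r` indexed by a subset `I`. -/
def subVec {d : ℕ} (r : Fin d → ℝ) (I : Finset (Fin d)) : I → ℝ :=
  fun a => r a

/-- The candidate fixed point `θ_*^{(I)}` supported on `I`,
with `(θ_*^{(I)})_I = (M_{II})⁻¹ r_I` and zero outside `I`. -/
noncomputable def thetaStar {d : ℕ} (M : Matrix (Fin d) (Fin d) ℝ) (r : Fin d → ℝ)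
    (I : Finset (Fin d)) : Fin d → ℝ :=
  fun i => if h : i ∈ I then ((subMat M I)⁻¹ *ᵥ subVec r I) ⟨i, h⟩ else 0


lemma dp_self_nonneg {ι : Type*} [Fintype ι] (v : ι → ℝ) : 0 ≤ v ⬝ᵥ v :=
  Finset.sum_nonneg fun i _ => mul_self_nonneg _

lemma dp_self_zero {ι : Type*} [Fintype ι] (v : ι → ℝ) (h : v ⬝ᵥ v = 0) : v = 0 := by
  funext i
  have := (Finset.sum_eq_zero_iff_of_nonneg fun j (_ : j ∈ Finset.univ) =>
    mul_self_nonneg (v j)).mp h i (Finset.mem_univ i)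
  simpa [mul_self_eq_zero] using this

lemma quad_eq {n : ℕ} {ι : Type*} [Fintype ι] (B : Matrix (Fin n) ι ℝ) (v : ι → ℝ) :
    v ⬝ᵥ ((Bᵀ * B) *ᵥ v) = (B *ᵥ v) ⬝ᵥ (B *ᵥ v) := by
  rw [← mulVec_mulVec, dotProduct_mulVec, vecMul_transpose]

lemma quad_zero {n : ℕ} {ι : Type*} [Fintype ι] (B : Matrix (Fin n) ι ℝ) (v : ι → ℝ)
    (h : v ⬝ᵥ ((Bᵀ * B) *ᵥ v) ≤ 0) : B *ᵥ v = 0 := by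
  rw [quad_eq] at h
  exact dp_self_zero _ (le_antisymm h (dp_self_nonneg _))

lemma dotProduct_expand {ι : Type*} [Fintype ι] (A : Matrix ι ι ℝ) (u v : ι → ℝ) :
    u ⬝ᵥ (A *ᵥ v) = ∑ i, ∑ j, u i * (A i j * v j) := by
  simp [dotProduct, mulVec, Finset.mul_sum]

lemma key {n : ℕ} {ι : Type*} [Fintype ι] [DecidableEq ι]
    (B : Matrix (Fin n) ι ℝ) (y : Fin n → ℝ)
    (hpos : ∀ i, 0 < (Bᵀ *ᵥ y) i)
    (hoff : ∀ i j, i ≠ j → (Bᵀ * B) i j ≤ 0) :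
    IsUnit (Bᵀ * B) ∧ ∀ i, 0 < ((Bᵀ * B)⁻¹ *ᵥ (Bᵀ *ᵥ y)) i := by
  set A := Bᵀ * B with hA
  set c := Bᵀ *ᵥ y with hc
  have hBzero : ∀ v : ι → ℝ, B *ᵥ v = 0 → c ⬝ᵥ v = 0 := by
    intro v hv
    rw [hc, dotProduct_comm, dotProduct_mulVec, vecMul_transpose, hv, zero_dotProduct]
  have habs : ∀ v : ι → ℝ, (fun i => |v i|) ⬝ᵥ (A *ᵥ fun i => |v i|) ≤ v ⬝ᵥ (A *ᵥ v) := by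
    intro v
    rw [dotProduct_expand, dotProduct_expand]
    refine Finset.sum_le_sum fun i _ => Finset.sum_le_sum fun j _ => ?_
    rcases eq_or_ne i j with rfl | hij
    · have h := abs_mul_abs_self (v i)
      have : |v i| * (A i i * |v i|) = v i * (A i i * v i) := by
        rw [mul_left_comm, h, ← mul_left_comm]
      exact this.le
    · have h1 : A i j ≤ 0 := hoff i j hij
      have h2 : v i * v j ≤ |v i| * |v j| := by rw [← abs_mul]; exact le_abs_self _
      have h3 := mul_le_mul_of_nonpos_left h2 h1
      nlinarith [h3]
  have hinj : ∀ v : ι → ℝ, A *ᵥ v = 0 → v = 0 := by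
    intro v hv
    have h0 : v ⬝ᵥ (A *ᵥ v) = 0 := by rw [hv]; simp
    have h1 : (fun i => |v i|) ⬝ᵥ (A *ᵥ fun i => |v i|) ≤ 0 := by
      rw [← h0]; exact habs v
    have h2 : B *ᵥ (fun i => |v i|) = 0 := quad_zero B _ h1
    have h3 : c ⬝ᵥ (fun i => |v i|) = 0 := hBzero _ h2
    funext i
    have h4 := (Finset.sum_eq_zero_iff_of_nonneg fun j (_ : j ∈ Finset.univ) =>
      mul_nonneg (hpos j).le (abs_nonneg (v j))).mp h3 i (Finset.mem_univ i)
    rcases mul_eq_zero.mp h4 with h | h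
    · exact absurd h (ne_of_gt (hpos i))
    · simpa using abs_eq_zero.mp h
  have hdet : A.det ≠ 0 := by
    intro h
    obtain ⟨v, hv0, hv⟩ := (Matrix.exists_mulVec_eq_zero_iff).mpr h
    exact hv0 (hinj v hv)
  have hunit : IsUnit A := (Matrix.isUnit_iff_isUnit_det A).mpr (isUnit_iff_ne_zero.mpr hdet)
  refine ⟨hunit, ?_⟩
  set θ := A⁻¹ *ᵥ c with hθ
  have hAθ : A *ᵥ θ = c := by
    rw [hθ, mulVec_mulVec, Matrix.mul_nonsing_inv A (isUnit_iff_ne_zero.mpr hdet), one_mulVec]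
  set p : ι → ℝ := fun i => max (θ i) 0 with hp
  set m : ι → ℝ := fun i => max (-θ i) 0 with hm
  have hpm : ∀ i, θ i = p i - m i := by
    intro i
    rcases le_total (θ i) 0 with h | h
    · simp [hp, hm, max_eq_right h, max_eq_left (neg_nonneg.mpr h)]
    · simp [hp, hm, max_eq_left h, max_eq_right (neg_nonpos.mpr h)]
  have hpnn : ∀ i, 0 ≤ p i := fun i => le_max_right _ _
  have hmnn : ∀ i, 0 ≤ m i := fun i => le_max_right _ _
  have hpm0 : ∀ i, p i * m i = 0 := by
    intro i
    rcases le_total (θ i) 0 with h | h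
    · simp [hp, max_eq_right h]
    · simp [hm, max_eq_right (neg_nonpos.mpr h)]
  have hmAp : m ⬝ᵥ (A *ᵥ p) ≤ 0 := by
    rw [dotProduct_expand]
    refine Finset.sum_nonpos fun i _ => Finset.sum_nonpos fun j _ => ?_
    rcases eq_or_ne i j with rfl | hij
    · rcases mul_eq_zero.mp (hpm0 i) with h | h <;> simp [h]
    · exact mul_nonpos_of_nonneg_of_nonpos (hmnn i)
        (mul_nonpos_of_nonpos_of_nonneg (hoff i j hij) (hpnn j))
  have hmc : m ⬝ᵥ c = 0 := by
    have hmθ : m ⬝ᵥ (A *ᵥ θ) = m ⬝ᵥ c := by rw [hAθ]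
    have hsplit : m ⬝ᵥ (A *ᵥ θ) = m ⬝ᵥ (A *ᵥ p) - m ⬝ᵥ (A *ᵥ m) := by
      have hθe : θ = fun i => p i - m i := funext hpm
      rw [hθe]
      have : A *ᵥ (fun i => p i - m i) = (A *ᵥ p) - (A *ᵥ m) := by
        rw [← mulVec_sub]; rfl
      rw [this, dotProduct_sub]
    have hmAm : 0 ≤ m ⬝ᵥ (A *ᵥ m) := by rw [hA, quad_eq]; exact dp_self_nonneg _
    have hmc0 : 0 ≤ m ⬝ᵥ c :=
      Finset.sum_nonneg fun i _ => mul_nonneg (hmnn i) (hpos i).le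
    have : m ⬝ᵥ c ≤ 0 := by rw [← hmθ, hsplit]; linarith
    linarith
  have hm0 : m = 0 := by
    funext i
    have h4 := (Finset.sum_eq_zero_iff_of_nonneg fun j (_ : j ∈ Finset.univ) =>
      mul_nonneg (hmnn j) (hpos j).le).mp hmc i (Finset.mem_univ i)
    rcases mul_eq_zero.mp h4 with h | h
    · exact h
    · exact absurd h (ne_of_gt (hpos i))
  have hθnn : ∀ i, 0 ≤ θ i := by
    intro i
    have h := hpm i
    rw [hm0] at h
    simp at h
    rw [h]
    exact hpnn i
  intro i
  have hci : c i = ∑ j, A i j * θ j := by rw [← hAθ]; rfl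
  have hle : c i ≤ A i i * θ i := by
    rw [hci]
    have hsum : ∑ j, A i j * θ j = A i i * θ i + ∑ j ∈ Finset.univ.erase i, A i j * θ j :=
      (Finset.add_sum_erase _ _ (Finset.mem_univ i)).symm
    rw [hsum]
    have : ∑ j ∈ Finset.univ.erase i, A i j * θ j ≤ 0 :=
      Finset.sum_nonpos fun j hj =>
        mul_nonpos_of_nonpos_of_nonneg (hoff i j (Finset.ne_of_mem_erase hj).symm) (hθnn j)
    linarith
  have hci' := hpos i
  rcases lt_or_eq_of_le (hθnn i) with h | h
  · exact h
  · exfalso; rw [← h] at hle; simp at hle; linarith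

/-- Under (A1) and (A2), for every `I ⊆ {1,…,d}`, `M_{II}` is invertible,
`(M_{II})⁻¹ r_I > 0`, and `θ_*^{(I)}` is a nonnegative fixed point of the DLN vector
field `Ψ(θ)ᵢ = θᵢ (rᵢ − (Mθ)ᵢ)` with support exactly `I`. -/
theorem dln_fixed_point (n d : ℕ) (hn : 0 < n) (hd : 0 < d)
    (X : Matrix (Fin n) (Fin d) ℝ) (y : Fin n → ℝ)
    (M : Matrix (Fin d) (Fin d) ℝ) (r : Fin d → ℝ)
    (hM : M = Xᵀ * X) (hr : r = Xᵀ *ᵥ y)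
    (hA1 : ∀ i, 0 < r i)
    (hA2 : ∀ i j, i ≠ j → M i j ≤ 0)
    (I : Finset (Fin d)) :
    IsUnit (subMat M I) ∧
    (∀ a : I, 0 < ((subMat M I)⁻¹ *ᵥ subVec r I) a) ∧
    (∀ i, 0 ≤ thetaStar M r I i) ∧
    (∀ i, thetaStar M r I i * (r i - (M *ᵥ thetaStar M r I) i) = 0) ∧
    {i : Fin d | 0 < thetaStar M r I i} = ↑I := by
  set B : Matrix (Fin n) I ℝ := fun k a => X k a with hB
  have hsub : subMat M I = Bᵀ * B := by
    funext a b
    simp [subMat, hB, hM, Matrix.mul_apply, Matrix.transpose_apply]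
    rfl
  have hvec : subVec r I = Bᵀ *ᵥ y := by
    funext a
    simp [subVec, hB, hr, Matrix.mulVec, Matrix.transpose_apply, dotProduct]
    rfl
  have hpos : ∀ a : I, 0 < (Bᵀ *ᵥ y) a := by
    intro a; rw [← hvec]; exact hA1 a
  have hoff : ∀ a b : I, a ≠ b → (Bᵀ * B) a b ≤ 0 := by
    intro a b hab
    rw [← hsub]
    exact hA2 a b (fun h => hab (Subtype.ext h))
  obtain ⟨hu, hθpos⟩ := key B y hpos hoff
  rw [← hsub] at hu hθpos
  rw [← hvec] at hθpos
  set θ := (subMat M I)⁻¹ *ᵥ subVec r I with hθ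
  have hAθ : subMat M I *ᵥ θ = subVec r I := by
    rw [hθ, mulVec_mulVec, Matrix.mul_nonsing_inv _ ((Matrix.isUnit_iff_isUnit_det _).mp hu),
      one_mulVec]
  have hθnn : ∀ i, 0 ≤ thetaStar M r I i := by
    intro i
    unfold thetaStar
    split
    · exact (hθpos _).le
    · exact le_refl 0
  have hMθ : ∀ i, i ∈ I → (M *ᵥ thetaStar M r I) i = r i := by
    intro i h
    have e1 : (M *ᵥ thetaStar M r I) i = ∑ j ∈ I, M i j * thetaStar M r I j := by
      simp only [mulVec, dotProduct]
      exact (Finset.sum_subset (Finset.subset_univ I)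
        (fun x _ hx => by simp [thetaStar, hx])).symm
    have e2 : ∑ j ∈ I, M i j * thetaStar M r I j = ∑ a ∈ I.attach, M i a * θ a := by
      rw [← Finset.sum_attach I (fun j => M i j * thetaStar M r I j)]
      refine Finset.sum_congr rfl fun a _ => ?_
      simp [thetaStar, a.2]
      left; rfl
    have e3 : ∑ a ∈ I.attach, M i a * θ a = (subMat M I *ᵥ θ) ⟨i, h⟩ := by
      simp [mulVec, dotProduct, subMat, Finset.univ_eq_attach]
    rw [e1, e2, e3, hAθ]
    rfl
  refine ⟨hu, hθpos, hθnn, ?_, ?_⟩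
  · intro i
    by_cases h : i ∈ I
    · rw [hMθ i h, sub_self, mul_zero]
    · simp [thetaStar, h]
  · ext i
    simp only [Set.mem_setOf_eq, Finset.coe_sort_coe, Finset.mem_coe]
    constructor
    · intro hp
      by_contra h
      simp [thetaStar, h] at hp
    · intro h
      simp only [thetaStar, dif_pos h]
      exact hθpos _
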